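/- For a multilinear function f : ℝ^T → ℝ, the nested first-order derivative computation (∂/∂λ₁)(⋯((∂f/∂λ_T)·λ_T)⋯)·λ₁ equals the T-th order mixed partial derivative ∂^T f/(∂λ₁⋯∂λ_T) evaluated anywhere, multiplied by λ₁·λ₂·⋯·λ_T. -/

import Mathlib

/-- Partial derivative of `F : ℝ^T → ℝ` in coordinate `t`. -/
noncomputable def pd {T : ℕ} (t : Fin T) (F : (Fin T → ℝ) → ℝ) : (Fin T → ℝ) → ℝ :=
  fun lam => deriv (fun u => F (Function.update lam t u)) (lam t)

/-- Mixed partial derivative `∂^T F / (∂λ₁ ⋯ ∂λ_T)`. -/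
noncomputable def mixedPartial {T : ℕ} (F : (Fin T → ℝ) → ℝ) : (Fin T → ℝ) → ℝ :=
  (List.finRange T).foldr pd F

/-- Nested Gradient×Input computation. -/
noncomputable def nestedGI {T : ℕ} (F : (Fin T → ℝ) → ℝ) : (Fin T → ℝ) → ℝ :=
  (List.finRange T).foldr (fun t G => fun lam => pd t G lam * lam t) F

lemma pd_form {T : ℕ} (c : ℝ) (S : Finset (Fin T)) (t : Fin T) (ht : t ∈ S) :
    pd t (fun lam => c * ∏ s ∈ S, lam s) = fun lam => c * ∏ s ∈ S.erase t, lam s := by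
  funext lam
  unfold pd
  have h : (fun u => c * ∏ s ∈ S, Function.update lam t u s)
      = fun u => (c * ∏ s ∈ S.erase t, lam s) * u := by
    funext u
    rw [Finset.prod_update_of_mem ht, Finset.sdiff_singleton_eq_erase]
    ring
  rw [h]
  have := ((hasDerivAt_id (lam t)).const_mul (c * ∏ s ∈ S.erase t, lam s)).deriv
  simpa using this

lemma mixed_fold {T : ℕ} (c : ℝ) (L : List (Fin T)) :
    ∀ S : Finset (Fin T), L.Nodup → (∀ t ∈ L, t ∈ S) →
    L.foldr pd (fun lam => c * ∏ s ∈ S, lam s)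
      = fun lam => c * ∏ s ∈ S \ L.toFinset, lam s := by
  induction L with
  | nil => intro S _ _; simp
  | cons t tl ih =>
    intro S hnd hsub
    have hnd' := hnd
    rw [List.nodup_cons] at hnd'
    have htl : ∀ s ∈ tl, s ∈ S := fun s hs => hsub s (List.mem_cons_of_mem _ hs)
    rw [List.foldr_cons, ih S hnd'.2 htl, pd_form]
    · funext lam
      congr 1
      apply Finset.prod_congr _ (fun _ _ => rfl)
      ext x
      simp [Finset.mem_erase, Finset.mem_sdiff, and_comm, and_assoc, and_left_comm]
    · simp [Finset.mem_sdiff, hsub t (List.mem_cons_self (a := t) (l := tl)), hnd'.1]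

lemma gi_fold {T : ℕ} (c : ℝ) (L : List (Fin T)) :
    ∀ S : Finset (Fin T), (∀ t ∈ L, t ∈ S) →
    L.foldr (fun t G => fun lam => pd t G lam * lam t) (fun lam => c * ∏ s ∈ S, lam s)
      = fun lam => c * ∏ s ∈ S, lam s := by
  induction L with
  | nil => intro S _; rfl
  | cons t tl ih =>
    intro S hsub
    have htl : ∀ s ∈ tl, s ∈ S := fun s hs => hsub s (List.mem_cons_of_mem _ hs)
    rw [List.foldr_cons, ih S htl]
    funext lam
    rw [pd_form c S t (hsub t (List.mem_cons_self (a := t) (l := tl)))]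
    have := Finset.mul_prod_erase S lam (hsub t (List.mem_cons_self (a := t) (l := tl)))
    rw [mul_assoc, mul_comm (∏ s ∈ S.erase t, lam s) (lam t), this]


/-- For a multilinear `f`, the nested first-order derivative computation equals the
`T`-th order mixed partial (evaluated anywhere) times `λ₁⋯λ_T`. -/
theorem nestedGI_eq_mixedPartial {T : ℕ} (f : (Fin T → ℝ) → ℝ)
    (hf : ∀ (t : Fin T) (lam : Fin T → ℝ),
      IsLinearMap ℝ (fun u : ℝ => f (Function.update lam t u))) :
    ∀ lam mu : Fin T → ℝ, nestedGI f lam = mixedPartial f mu * ∏ t, lam t := by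
  intro lam mu
  let g : MultilinearMap ℝ (fun _ : Fin T => ℝ) ℝ :=
    { toFun := f
      map_update_add' := fun m i x y => by
        convert (hf i m).map_add x y using 3 <;> congr!
      map_update_smul' := fun m i r x => by
        convert (hf i m).map_smul r x using 3 <;> congr! }
  have hg : ∀ m, g m = f m := fun m => rfl
  set c := f (fun _ => 1) with hc
  have hfe : f = fun lam => c * ∏ t, lam t := by
    funext m
    have h1 : g m = (∏ i, m i) • g (fun _ => 1) := by
      conv_lhs => rw [← MultilinearMap.mkPiRing_apply_one_eq_self g]
      simp
    rw [hg, hg] at h1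
    rw [h1, smul_eq_mul, ← hc, mul_comm]
  have hsub : ∀ t ∈ List.finRange T, t ∈ (Finset.univ : Finset (Fin T)) :=
    fun t _ => Finset.mem_univ t
  have hm : mixedPartial f mu = c := by
    unfold mixedPartial
    rw [hfe, mixed_fold c _ Finset.univ (List.nodup_finRange T) hsub]
    simp
  have hn : nestedGI f lam = c * ∏ t, lam t := by
    unfold nestedGI
    rw [hfe, gi_fold c _ Finset.univ hsub]
  rw [hn, hm]
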